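/- For the Stokes expansion of periodic traveling waves of the Kawahara equation, substituting φ = ū + a·(1/2)cos θ + a² φ₂(θ) and ω = ū k − α k³ + k⁵ + a² ω₂ into the equation −(ω/k) φ + (1/2) φ² + α k² φ'' + k⁴ φ⁽⁴⁾ = A and collecting terms at order a² determines φ₂(θ) = −cos(2θ)/(240 k⁴ − 48 α k²), provided 240 k⁴ − 48 α k² ≠ 0, i.e., k² ≠ α/5. -/

import Mathlib

lemma kawahara_hdcos (c s : ℝ) :
    HasDerivAt (fun s : ℝ => Real.cos (2*s) * c) (Real.sin (2*s) * (-2*c)) s := by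
  have := ((Real.hasDerivAt_cos (2*s)).comp s ((hasDerivAt_id s).const_mul 2)).mul_const c
  exact this.congr_deriv (by ring)

lemma kawahara_hdsin (c s : ℝ) :
    HasDerivAt (fun s : ℝ => Real.sin (2*s) * c) (Real.cos (2*s) * (2*c)) s := by
  have := ((Real.hasDerivAt_sin (2*s)).comp s ((hasDerivAt_id s).const_mul 2)).mul_const c
  exact this.congr_deriv (by ring)

lemma kawahara_dcos (c : ℝ) :
    deriv (fun s : ℝ => Real.cos (2*s) * c) = fun s => Real.sin (2*s) * (-2*c) :=
  funext fun s => (kawahara_hdcos c s).deriv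

lemma kawahara_dsin (c : ℝ) :
    deriv (fun s : ℝ => Real.sin (2*s) * c) = fun s => Real.cos (2*s) * (2*c) :=
  funext fun s => (kawahara_hdsin c s).deriv

lemma kawahara_it2 (c : ℝ) :
    iteratedDeriv 2 (fun s : ℝ => Real.cos (2*s) * c) = fun s => Real.cos (2*s) * (2*(-2*c)) := by
  rw [show (2:ℕ) = 1 + 1 from rfl, iteratedDeriv_succ, iteratedDeriv_one,
    kawahara_dcos, kawahara_dsin]

lemma kawahara_it4 (c : ℝ) :
    iteratedDeriv 4 (fun s : ℝ => Real.cos (2*s) * c) =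
      fun s => Real.cos (2*s) * (2*(-2*(2*(-2*(2*(-2*c))))) / (2*(-2))) := by
  rw [show (4:ℕ) = 3 + 1 from rfl, show (3:ℕ) = 2 + 1 from rfl, iteratedDeriv_succ,
    iteratedDeriv_succ, kawahara_it2, kawahara_dcos, kawahara_dsin]
  funext s; ring

/-- Second-order Stokes correction for periodic traveling waves of the Kawahara
equation: with leading-order speed `c₀ = ū − α k² + k⁴` and provided
`240 k⁴ − 48 α k² ≠ 0` (i.e. `k² ≠ α/5`), the function
`φ₂(θ) = −cos(2θ)/(240 k⁴ − 48 α k²)` satisfies the second-harmonic balance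
obtained at order `a²`:
`(ū − c₀) φ₂ + α k² φ₂'' + k⁴ φ₂⁗ + (1/16) cos 2θ = 0`. -/
theorem kawahara_stokes_second_order (ubar α k : ℝ) (hk : k ≠ 0)
    (hres : 240 * k ^ 4 - 48 * α * k ^ 2 ≠ 0) :
    ∀ θ : ℝ,
      (ubar - (ubar - α * k ^ 2 + k ^ 4))
          * (-Real.cos (2 * θ) / (240 * k ^ 4 - 48 * α * k ^ 2))
        + α * k ^ 2 * iteratedDeriv 2
            (fun s => -Real.cos (2 * s) / (240 * k ^ 4 - 48 * α * k ^ 2)) θ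
        + k ^ 4 * iteratedDeriv 4
            (fun s => -Real.cos (2 * s) / (240 * k ^ 4 - 48 * α * k ^ 2)) θ
        + (1/16) * Real.cos (2 * θ) = 0 := by
  intro θ
  set D : ℝ := 240 * k ^ 4 - 48 * α * k ^ 2 with hD
  have hfun : (fun s : ℝ => -Real.cos (2 * s) / D)
      = fun s : ℝ => Real.cos (2*s) * (-1/D) := by
    funext s; ring
  rw [hfun, kawahara_it2, kawahara_it4]
  have : 2*(-2*(2*(-2*(2*(-2*(-1/D:ℝ)))))) / (2*(-2)) = -16/D := by ring
  rw [this]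
  field_simp
  ring
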